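/- Let ξ ⊆ E be an edge subset, t a sink node, and r an integer with mincut(ξ, t) ≤ r ≤ C_t, where C_t is the minimum cut capacity separating t from the source s. Then there exists an edge subset η ⊆ E of size r that is primary for t and that separates t from ξ. -/

import Mathlib

open Finset Matrix

/-- `l` is a nonempty directed trail: consecutive edges are adjacent. -/
def IsTrail {V E : Type*} (tail head : E → V) (l : List E) : Prop :=
  l ≠ [] ∧ l.Chain' (fun a b => head a = tail b)

/-- A directed path from the edge `e` to the node `t`. -/
def EPath {V E : Type*} (tail head : E → V) (e : E) (t : V) (l : List E) : Prop :=
  IsTrail tail head l ∧ l.head? = some e ∧ ∃ f, l.getLast? = some f ∧ head f = t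

/-- A directed path from the node `s` to the node `t`. -/
def NPath {V E : Type*} (tail head : E → V) (s t : V) (l : List E) : Prop :=
  IsTrail tail head l ∧ (∃ f, l.head? = some f ∧ tail f = s) ∧
    ∃ g, l.getLast? = some g ∧ head g = t

/-- `A` is a cut separating the node `t` from the edge subset `ξ`: every directed path
from an edge of `ξ` to `t` meets `A`. -/
def SeparatesF {V E : Type*} (tail head : E → V) (ξ : Finset E) (t : V) (A : Finset E) : Prop :=
  ∀ e ∈ ξ, ∀ l : List E, EPath tail head e t l → ∃ a ∈ A, a ∈ l

/-- `A` is a cut separating the node `t` from the node `s`. -/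
def SeparatesN {V E : Type*} (tail head : E → V) (s t : V) (A : Finset E) : Prop :=
  ∀ l : List E, NPath tail head s t l → ∃ a ∈ A, a ∈ l

/-- Minimum cut capacity separating `t` from the edge subset `ξ`. -/
noncomputable def mincutE {V E : Type*} (tail head : E → V) (ξ : Finset E) (t : V) : ℕ :=
  sInf {n | ∃ A : Finset E, SeparatesF tail head ξ t A ∧ A.card = n}

/-- Minimum cut capacity separating `t` from the node `s`. -/
noncomputable def mincutN {V E : Type*} (tail head : E → V) (s t : V) : ℕ :=
  sInf {n | ∃ A : Finset E, SeparatesN tail head s t A ∧ A.card = n}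

/-- `A` is a minimum cut separating `t` from `ξ`. -/
def IsMinCut {V E : Type*} (tail head : E → V) (ξ : Finset E) (t : V) (A : Finset E) : Prop :=
  SeparatesF tail head ξ t A ∧ A.card = mincutE tail head ξ t

/-- `A` is the primary minimum cut separating `t` from `ξ`: a minimum cut that separates
`t` from every minimum cut separating `t` from `ξ`. -/
def IsPrimaryMinCut {V E : Type*} (tail head : E → V) (ξ : Finset E) (t : V) (A : Finset E) :
    Prop :=
  IsMinCut tail head ξ t A ∧ ∀ B : Finset E, IsMinCut tail head ξ t B → SeparatesF tail head B t A

/-- `η` is primary for `t`: `η` is the primary minimum cut separating `t` from `η` itself. -/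
def PrimaryFor {V E : Type*} (tail head : E → V) (η : Finset E) (t : V) : Prop :=
  IsPrimaryMinCut tail head η t η

/-- The directed graph is acyclic: there is a topological order on the edges. -/
def Acyclic {V E : Type*} (tail head : E → V) : Prop :=
  ∃ f : E → ℕ, ∀ d e, head d = tail e → f d < f e


section Aux
set_option linter.unusedSectionVars false

open Classical

variable {V E : Type*} [Fintype E] [DecidableEq E]

/-- `e` can reach `t` by a directed path avoiding `A`. -/
def Reach (tail head : E → V) (t : V) (A : Finset E) (e : E) : Prop :=
  ∃ l, EPath tail head e t l ∧ ∀ a ∈ A, a ∉ l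

variable (tail head : E → V) (t : V)

lemma epath_head_mem {e : E} {l : List E} (h : EPath tail head e t l) : e ∈ l := by
  obtain ⟨-, h2, -⟩ := h
  cases l with
  | nil => simp at h2
  | cons x l => simp at h2; subst h2; exact List.mem_cons_self

lemma epath_cons_eq {e x : E} {l : List E} (h : EPath tail head e t (x :: l)) : x = e := by
  obtain ⟨-, h2, -⟩ := h; simpa using h2

lemma epath_tail {e : E} {l : List E} (h : EPath tail head e t (e :: l)) (hl : l ≠ []) :
    ∃ e', l.head? = some e' ∧ head e = tail e' ∧ EPath tail head e' t l := by
  obtain ⟨⟨-, hchain⟩, -, f, hlast, hft⟩ := h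
  cases l with
  | nil => exact absurd rfl hl
  | cons y l' =>
    rw [List.Chain', List.isChain_cons_cons] at hchain
    refine ⟨y, rfl, hchain.1, ⟨⟨List.cons_ne_nil _ _, hchain.2⟩, rfl, f, ?_, hft⟩⟩
    rw [List.getLast?_cons_cons] at hlast
    exact hlast

lemma epath_prepend {d e : E} {l : List E} (hde : head d = tail e)
    (h : EPath tail head e t l) : EPath tail head d t (d :: l) := by
  obtain ⟨⟨hne, hchain⟩, hhead, f, hlast, hft⟩ := h
  refine ⟨⟨List.cons_ne_nil _ _, ?_⟩, rfl, f, ?_, hft⟩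
  · rw [List.Chain', List.isChain_cons]
    exact ⟨fun b hb => by rw [hhead] at hb; cases hb; exact hde, hchain⟩
  · cases l with
    | nil => exact absurd rfl hne
    | cons y l' => rw [List.getLast?_cons_cons]; exact hlast

lemma reach_not_mem {A : Finset E} {e : E} (h : Reach tail head t A e) : e ∉ A := by
  obtain ⟨l, hl, hA⟩ := h
  intro he
  exact hA e he (epath_head_mem tail head t hl)

lemma reach_base {A : Finset E} {e : E} (ht : head e = t) (he : e ∉ A) :
    Reach tail head t A e :=
  ⟨[e], ⟨⟨List.cons_ne_nil _ _, List.isChain_singleton e⟩, rfl, e, rfl, ht⟩,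
    fun a ha hmem => by rw [List.mem_singleton] at hmem; subst hmem; exact he ha⟩

lemma reach_step {A : Finset E} {d e : E} (hde : head d = tail e) (hd : d ∉ A)
    (h : Reach tail head t A e) : Reach tail head t A d := by
  obtain ⟨l, hl, hA⟩ := h
  refine ⟨d :: l, epath_prepend tail head t hde hl, fun a ha hmem => ?_⟩
  rcases List.mem_cons.1 hmem with h1 | h1
  · subst h1; exact hd ha
  · exact hA a ha h1

lemma not_reach_iff {A : Finset E} {e : E} :
    ¬ Reach tail head t A e ↔ ∀ l, EPath tail head e t l → ∃ a ∈ A, a ∈ l := by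
  unfold Reach
  push_neg
  exact Iff.rfl

lemma sep_iff {ξ A : Finset E} :
    SeparatesF tail head ξ t A ↔ ∀ e ∈ ξ, ¬ Reach tail head t A e := by
  constructor
  · intro h e he
    rw [not_reach_iff]
    exact h e he
  · intro h e he
    rw [← not_reach_iff]
    exact h e he

/-- Key uncrossing lemma, "last vertex in `A ∪ B`" form. -/
lemma hit_join {A B : Finset E} : ∀ (l : List E) (e : E), EPath tail head e t l →
    (∃ a ∈ l, a ∈ A ∪ B) →
    ∃ c ∈ l, (c ∈ A ∧ c ∈ B) ∨ (c ∈ A ∧ Reach tail head t B c) ∨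
      (c ∈ B ∧ Reach tail head t A c) := by
  intro l
  induction l with
  | nil => intro e _ h; simp at h
  | cons x l ih =>
    intro e hpath hex
    have hx : x = e := epath_cons_eq tail head t hpath
    subst hx
    by_cases hl' : ∃ a ∈ l, a ∈ A ∪ B
    · have hlne : l ≠ [] := by
        obtain ⟨a, ha, -⟩ := hl'
        exact List.ne_nil_of_mem ha
      obtain ⟨e', -, -, hpath'⟩ := epath_tail tail head t hpath hlne
      obtain ⟨c, hc, hcc⟩ := ih e' hpath' hl'
      exact ⟨c, List.mem_cons_of_mem _ hc, hcc⟩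
    · push_neg at hl'
      obtain ⟨a, ha, haAB⟩ := hex
      have hax : a = x := by
        rcases List.mem_cons.1 ha with h1 | h1
        · exact h1
        · exact absurd haAB (hl' a h1)
      subst hax
      rcases Finset.mem_union.1 haAB with hA1 | hB1
      · by_cases hB2 : a ∈ B
        · exact ⟨a, List.mem_cons_self, Or.inl ⟨hA1, hB2⟩⟩
        · refine ⟨a, List.mem_cons_self, Or.inr (Or.inl ⟨hA1, ⟨a :: l, hpath, ?_⟩⟩)⟩
          intro b hb hmem
          rcases List.mem_cons.1 hmem with h1 | h1
          · subst h1; exact hB2 hb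
          · exact hl' b h1 (Finset.mem_union_right _ hb)
      · by_cases hA2 : a ∈ A
        · exact ⟨a, List.mem_cons_self, Or.inl ⟨hA2, hB1⟩⟩
        · refine ⟨a, List.mem_cons_self, Or.inr (Or.inr ⟨hB1, ⟨a :: l, hpath, ?_⟩⟩)⟩
          intro b hb hmem
          rcases List.mem_cons.1 hmem with h1 | h1
          · subst h1; exact hA2 hb
          · exact hl' b h1 (Finset.mem_union_left _ hb)

/-- Key uncrossing lemma, "first vertex in `A ∪ B`" form. -/
lemma hit_meet {A B : Finset E} : ∀ (l : List E) (e : E), EPath tail head e t l →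
    ¬ Reach tail head t A e → ¬ Reach tail head t B e →
    ∃ c ∈ l, (c ∈ A ∧ c ∈ B) ∨ (c ∈ A ∧ c ∉ B ∧ ¬ Reach tail head t B c) ∨
      (c ∈ B ∧ c ∉ A ∧ ¬ Reach tail head t A c) := by
  intro l
  induction l with
  | nil => intro e hpath _ _; exact absurd rfl hpath.1.1
  | cons x l ih =>
    intro e hpath hrA hrB
    have hx : x = e := epath_cons_eq tail head t hpath
    subst hx
    by_cases hA1 : x ∈ A
    · by_cases hB1 : x ∈ B
      · exact ⟨x, List.mem_cons_self, Or.inl ⟨hA1, hB1⟩⟩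
      · exact ⟨x, List.mem_cons_self, Or.inr (Or.inl ⟨hA1, hB1, hrB⟩)⟩
    · by_cases hB1 : x ∈ B
      · exact ⟨x, List.mem_cons_self, Or.inr (Or.inr ⟨hB1, hA1, hrA⟩)⟩
      · have hlne : l ≠ [] := by
          intro hnil
          subst hnil
          obtain ⟨-, -, f, hlast, hft⟩ := hpath
          simp at hlast
          subst hlast
          exact hrA (reach_base tail head t hft hA1)
        obtain ⟨e', -, hde, hpath'⟩ := epath_tail tail head t hpath hlne
        have hrA' : ¬ Reach tail head t A e' :=
          fun h => hrA (reach_step tail head t hde hA1 h)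
        have hrB' : ¬ Reach tail head t B e' :=
          fun h => hrB (reach_step tail head t hde hB1 h)
        obtain ⟨c, hc, hcc⟩ := ih e' hpath' hrA' hrB'
        exact ⟨c, List.mem_cons_of_mem _ hc, hcc⟩

/-- The "join" of two cuts: the uncrossed cut closer to `t`. -/
noncomputable def joinC (A B : Finset E) : Finset E :=
  (A.filter (Reach tail head t B)) ∪ (B.filter (Reach tail head t A)) ∪ (A ∩ B)

/-- The "meet" of two cuts: the uncrossed cut farther from `t`. -/
noncomputable def meetC (A B : Finset E) : Finset E :=
  (A.filter fun a => a ∉ B ∧ ¬ Reach tail head t B a) ∪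
    (B.filter fun b => b ∉ A ∧ ¬ Reach tail head t A b) ∪ (A ∩ B)

lemma mem_joinC {A B : Finset E} {c : E} :
    c ∈ joinC tail head t A B ↔
      (c ∈ A ∧ c ∈ B) ∨ (c ∈ A ∧ Reach tail head t B c) ∨
        (c ∈ B ∧ Reach tail head t A c) := by
  unfold joinC
  simp only [Finset.mem_union, Finset.mem_filter, Finset.mem_inter]
  tauto

lemma mem_meetC {A B : Finset E} {c : E} :
    c ∈ meetC tail head t A B ↔
      (c ∈ A ∧ c ∈ B) ∨ (c ∈ A ∧ c ∉ B ∧ ¬ Reach tail head t B c) ∨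
        (c ∈ B ∧ c ∉ A ∧ ¬ Reach tail head t A c) := by
  unfold meetC
  simp only [Finset.mem_union, Finset.mem_filter, Finset.mem_inter]
  tauto

lemma card_join_add_card_meet (A B : Finset E) :
    (joinC tail head t A B).card + (meetC tail head t A B).card = A.card + B.card := by
  have hU : joinC tail head t A B ∪ meetC tail head t A B = A ∪ B := by
    ext c
    simp only [Finset.mem_union, mem_joinC, mem_meetC]
    constructor
    · tauto
    · intro h
      by_cases hA : c ∈ A <;> by_cases hB : c ∈ B <;>
        by_cases hrA : Reach tail head t A c <;> by_cases hrB : Reach tail head t B c <;>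
        tauto
  have hI : joinC tail head t A B ∩ meetC tail head t A B = A ∩ B := by
    ext c
    simp only [Finset.mem_inter, mem_joinC, mem_meetC]
    constructor
    · intro ⟨h1, h2⟩
      rcases h1 with h1 | h1 | h1
      · exact h1
      · have := reach_not_mem tail head t h1.2
        tauto
      · have := reach_not_mem tail head t h1.2
        tauto
    · tauto
  have := Finset.card_union_add_card_inter (joinC tail head t A B) (meetC tail head t A B)
  rw [hU, hI] at this
  rw [← this]
  exact Finset.card_union_add_card_inter A B

lemma sep_joinC {ξ A B : Finset E} (hA : SeparatesF tail head ξ t A) :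
    SeparatesF tail head ξ t (joinC tail head t A B) := by
  intro e he l hl
  obtain ⟨a, haA, hal⟩ := hA e he l hl
  obtain ⟨c, hc, hcc⟩ := hit_join tail head t l e hl ⟨a, hal, Finset.mem_union_left _ haA⟩
  exact ⟨c, (mem_joinC tail head t).2 hcc, hc⟩

lemma sep_meetC {ξ A B : Finset E} (hA : SeparatesF tail head ξ t A)
    (hB : SeparatesF tail head ξ t B) :
    SeparatesF tail head ξ t (meetC tail head t A B) := by
  intro e he l hl
  have hrA : ¬ Reach tail head t A e := (sep_iff tail head t).1 hA e he
  have hrB : ¬ Reach tail head t B e := (sep_iff tail head t).1 hB e he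
  obtain ⟨c, hc, hcc⟩ := hit_meet tail head t l e hl hrA hrB
  exact ⟨c, (mem_meetC tail head t).2 hcc, hc⟩

/-- The join separates `t` from `A ∪ B`. -/
lemma joinC_sep_union (A B : Finset E) :
    SeparatesF tail head (A ∪ B) t (joinC tail head t A B) := by
  intro e he l hl
  obtain ⟨c, hc, hcc⟩ :=
    hit_join tail head t l e hl ⟨e, epath_head_mem tail head t hl, he⟩
  exact ⟨c, (mem_joinC tail head t).2 hcc, hc⟩

lemma reach_joinC {A B : Finset E} {v : E} (h : Reach tail head t (joinC tail head t A B) v) :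
    Reach tail head t A v ∧ Reach tail head t B v := by
  obtain ⟨l, hl, havoid⟩ := h
  have hclean : ∀ a ∈ l, a ∉ A ∪ B := by
    intro a hal haAB
    obtain ⟨c, hc, hcc⟩ := hit_join tail head t l v hl ⟨a, hal, haAB⟩
    exact havoid c ((mem_joinC tail head t).2 hcc) hc
  constructor
  · exact ⟨l, hl, fun a ha hm => hclean a hm (Finset.mem_union_left _ ha)⟩
  · exact ⟨l, hl, fun a ha hm => hclean a hm (Finset.mem_union_right _ ha)⟩

lemma sep_self (ξ : Finset E) : SeparatesF tail head ξ t ξ :=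
  fun e he l hl => ⟨e, he, epath_head_mem tail head t hl⟩

lemma exists_isMinCut (ξ : Finset E) : ∃ A, IsMinCut tail head ξ t A := by
  have hne : {n | ∃ A : Finset E, SeparatesF tail head ξ t A ∧ A.card = n}.Nonempty :=
    ⟨ξ.card, ξ, sep_self tail head t ξ, rfl⟩
  obtain ⟨A, hA, hc⟩ := Nat.sInf_mem hne
  exact ⟨A, hA, hc⟩

lemma mincutE_le {ξ A : Finset E} (hA : SeparatesF tail head ξ t A) :
    mincutE tail head ξ t ≤ A.card :=
  Nat.sInf_le ⟨A, hA, rfl⟩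

/-- Existence of the primary minimum cut. -/
lemma exists_primary (ξ : Finset E) : ∃ A, IsPrimaryMinCut tail head ξ t A := by
  set RS : Finset E → ℕ :=
    fun A => (Finset.univ.filter (Reach tail head t A)).card with hRSdef
  have hNne : {n | ∃ A, IsMinCut tail head ξ t A ∧ RS A = n}.Nonempty := by
    obtain ⟨A, hA⟩ := exists_isMinCut tail head t ξ
    exact ⟨RS A, A, hA, rfl⟩
  obtain ⟨A, hAmin, hRS⟩ := Nat.sInf_mem hNne
  refine ⟨A, hAmin, ?_⟩
  intro B hBmin
  -- the join of A and B is a minimum cut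
  have hsepJ : SeparatesF tail head ξ t (joinC tail head t A B) :=
    sep_joinC tail head t hAmin.1
  have hsepM : SeparatesF tail head ξ t (meetC tail head t A B) :=
    sep_meetC tail head t hAmin.1 hBmin.1
  have hJc : (joinC tail head t A B).card = mincutE tail head ξ t := by
    have h1 := mincutE_le tail head t hsepJ
    have h2 := mincutE_le tail head t hsepM
    have h3 := card_join_add_card_meet tail head t A B
    rw [hAmin.2, hBmin.2] at h3
    omega
  have hJmin : IsMinCut tail head ξ t (joinC tail head t A B) := ⟨hsepJ, hJc⟩
  -- reach sets: RS (join) ⊆ RS A, with minimal card, so equal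
  have hsub : Finset.univ.filter (Reach tail head t (joinC tail head t A B)) ⊆
      Finset.univ.filter (Reach tail head t A) := by
    intro v hv
    rw [Finset.mem_filter] at hv ⊢
    exact ⟨Finset.mem_univ _, (reach_joinC tail head t hv.2).1⟩
  have hle : RS A ≤ RS (joinC tail head t A B) := by
    rw [hRS]
    exact Nat.sInf_le ⟨joinC tail head t A B, hJmin, rfl⟩
  have heq : Finset.univ.filter (Reach tail head t (joinC tail head t A B)) =
      Finset.univ.filter (Reach tail head t A) :=
    Finset.eq_of_subset_of_card_le hsub hle
  -- conclude : A separates t from B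
  rw [sep_iff]
  intro b hb
  intro hrAb
  have hbJ : ¬ Reach tail head t (joinC tail head t A B) b :=
    (sep_iff tail head t).1 (joinC_sep_union tail head t A B) b (Finset.mem_union_right _ hb)
  have : b ∈ Finset.univ.filter (Reach tail head t A) :=
    Finset.mem_filter.2 ⟨Finset.mem_univ _, hrAb⟩
  rw [← heq, Finset.mem_filter] at this
  exact hbJ this.2

/-- From any member of a path there is a subpath to `t`. -/
lemma epath_suffix : ∀ (l : List E) (e : E), EPath tail head e t l →
    ∀ c ∈ l, ∃ m, EPath tail head c t m ∧ ∀ x ∈ m, x ∈ l := by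
  intro l
  induction l with
  | nil => intro e _ c hc; simp at hc
  | cons x l ih =>
    intro e hpath c hc
    have hx : x = e := epath_cons_eq tail head t hpath
    subst hx
    rcases List.mem_cons.1 hc with h1 | h1
    · subst h1
      exact ⟨c :: l, hpath, fun x hx => hx⟩
    · have hlne : l ≠ [] := List.ne_nil_of_mem h1
      obtain ⟨e', -, -, hpath'⟩ := epath_tail tail head t hpath hlne
      obtain ⟨m, hm, hsub⟩ := ih e' hpath' c h1
      exact ⟨m, hm, fun y hy => List.mem_cons_of_mem _ (hsub y hy)⟩

/-- If `D` separates `t` from `A` and `A` separates `t` from `ξ`, then `D` separates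
`t` from `ξ`. -/
lemma sep_trans {ξ A D : Finset E} (hA : SeparatesF tail head ξ t A)
    (hD : SeparatesF tail head A t D) : SeparatesF tail head ξ t D := by
  intro e he l hl
  obtain ⟨a, haA, hal⟩ := hA e he l hl
  obtain ⟨m, hm, hsub⟩ := epath_suffix tail head t l e hl a hal
  obtain ⟨d, hdD, hdm⟩ := hD a haA m hm
  exact ⟨d, hdD, hsub d hdm⟩

/-- A primary minimum cut for `ξ` is primary for itself. -/
lemma primaryFor_of_primary {ξ A : Finset E} (hA : IsPrimaryMinCut tail head ξ t A) :
    PrimaryFor tail head A t := by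
  have hcard : A.card = mincutE tail head A t := by
    have hle : mincutE tail head A t ≤ A.card :=
      mincutE_le tail head t (sep_self tail head t A)
    have hge : A.card ≤ mincutE tail head A t := by
      obtain ⟨D, hDsep, hDcard⟩ := exists_isMinCut tail head t A
      have : SeparatesF tail head ξ t D := sep_trans tail head t hA.1.1 hDsep
      have h2 := mincutE_le tail head t this
      rw [hA.1.2]
      omega
    omega
  refine ⟨⟨sep_self tail head t A, hcard⟩, ?_⟩
  intro B hB
  -- B is also a minimum cut of ξ
  have hBsep : SeparatesF tail head ξ t B := sep_trans tail head t hA.1.1 hB.1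
  have hBcard : B.card = mincutE tail head ξ t := by
    rw [hB.2, ← hcard, hA.1.2]
  exact hA.2 B ⟨hBsep, hBcard⟩

lemma mincutE_mono {ξ ζ : Finset E} (h : ξ ⊆ ζ) :
    mincutE tail head ξ t ≤ mincutE tail head ζ t := by
  obtain ⟨D, hDsep, hDcard⟩ := exists_isMinCut tail head t ζ
  have : SeparatesF tail head ξ t D := fun e he => hDsep e (h he)
  have := mincutE_le tail head t this
  omega

lemma mincutE_insert_le (ξ : Finset E) (e : E) :
    mincutE tail head (insert e ξ) t ≤ mincutE tail head ξ t + 1 := by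
  obtain ⟨D, hDsep, hDcard⟩ := exists_isMinCut tail head t ξ
  have hsep : SeparatesF tail head (insert e ξ) t (insert e D) := by
    intro x hx l hl
    rcases Finset.mem_insert.1 hx with h1 | h1
    · subst h1
      exact ⟨x, Finset.mem_insert_self _ _, epath_head_mem tail head t hl⟩
    · obtain ⟨a, haD, hal⟩ := hDsep x h1 l hl
      exact ⟨a, Finset.mem_insert_of_mem haD, hal⟩
  have h1 := mincutE_le tail head t hsep
  have h2 := Finset.card_insert_le e D
  omega

/-- Discrete intermediate value: adding edges of `S` to `ξ` one at a time. -/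
lemma mincutE_ivt (r : ℕ) : ∀ (S ξ : Finset E), mincutE tail head ξ t ≤ r →
    r ≤ mincutE tail head (ξ ∪ S) t →
    ∃ ζ : Finset E, ξ ⊆ ζ ∧ mincutE tail head ζ t = r := by
  intro S
  induction S using Finset.induction_on with
  | empty =>
    intro ξ h1 h2
    rw [Finset.union_empty] at h2
    exact ⟨ξ, Finset.Subset.refl _, le_antisymm h1 h2⟩
  | @insert e S he ih =>
    intro ξ h1 h2
    by_cases hc : r ≤ mincutE tail head (ξ ∪ S) t
    · exact ih ξ h1 hc
    · push_neg at hc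
      refine ⟨ξ ∪ insert e S, Finset.subset_union_left, ?_⟩
      have heq : ξ ∪ insert e S = insert e (ξ ∪ S) := Finset.union_insert e ξ S
      rw [heq] at h2 ⊢
      have h3 := mincutE_insert_le tail head t (ξ ∪ S) e
      omega

end Aux

/-- For an edge subset `ξ`, a sink node `t` and an integer `r` with
`mincut(ξ,t) ≤ r ≤ C_t` (where `C_t` is the minimum cut capacity separating `t` from the
source `s`), there exists a size-`r` edge subset `η` that is primary for `t` and
separates `t` from `ξ`. -/
theorem stmt1 {V E : Type*} [Fintype E] [DecidableEq E] (tail head : E → V)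
    (hacyc : Acyclic tail head) (s t : V) (ξ : Finset E) (r : ℕ)
    (h1 : mincutE tail head ξ t ≤ r) (h2 : r ≤ mincutN tail head s t) :
    ∃ η : Finset E, η.card = r ∧ PrimaryFor tail head η t ∧ SeparatesF tail head ξ t η := by
  classical
  set S : Finset E := Finset.univ.filter (fun e => tail e = s) with hS
  have hNS : r ≤ mincutE tail head (ξ ∪ S) t := by
    refine le_trans h2 ?_
    obtain ⟨D, hDsep, hDcard⟩ := exists_isMinCut tail head t (ξ ∪ S)
    have hsepN : SeparatesN tail head s t D := by
      intro l hl
      obtain ⟨htrail, ⟨f, hf, hfs⟩, hlast⟩ := hl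
      have hfS : f ∈ ξ ∪ S := by
        refine Finset.mem_union_right _ ?_
        rw [hS, Finset.mem_filter]
        exact ⟨Finset.mem_univ _, hfs⟩
      exact hDsep f hfS l ⟨htrail, hf, hlast⟩
    have hmem : D.card ∈ {n | ∃ A : Finset E, SeparatesN tail head s t A ∧ A.card = n} :=
      ⟨D, hsepN, rfl⟩
    have := Nat.sInf_le hmem
    calc mincutN tail head s t ≤ D.card := this
      _ = mincutE tail head (ξ ∪ S) t := hDcard
  obtain ⟨ζ, hζsub, hζ⟩ := mincutE_ivt tail head t r S ξ h1 hNS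
  obtain ⟨A, hA⟩ := exists_primary tail head t ζ
  refine ⟨A, ?_, primaryFor_of_primary tail head t hA, ?_⟩
  · rw [hA.1.2, hζ]
  · intro e he
    exact hA.1.1 e (hζsub he)
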